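/- Let a be real, 0 ≤ λ < 1, and f ∈ 𝒦_{a,λ}. Then the pre-Schwarzian norm satisfies ‖P_f‖ := sup_{z∈𝔻} |P_f(z)|(1−|z|²) ≤ 2(1+|a|) + 2λ² + λ. -/
import Mathlib


open Complex Metric

/-- the pre-Schwarzian norm bound
`‖P_f‖ ≤ 2(1+|a|) + 2λ² + λ` for `f ∈ 𝒦_{a,λ}`, where
`P_f(z) = 2(z+a)/(1−z²) + λ/(1−λz) + λ²·conj z/(1−λ²|z|²)`. -/
theorem preSchwarzian_norm_bound (a : ℝ) (l : ℝ) (hl : 0 ≤ l) (hl1 : l < 1) :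
    ∀ z ∈ ball (0 : ℂ) 1,
      ‖(2 * (z + a) / (1 - z ^ 2) + l / (1 - l * z) +
          (l : ℂ) ^ 2 * (starRingEnd ℂ) z / ((1 - l ^ 2 * ‖z‖ ^ 2 : ℝ) : ℂ))‖ *
        (1 - ‖z‖ ^ 2) ≤ 2 * (1 + |a|) + 2 * l ^ 2 + l := by
  intro z hz
  rw [mem_ball_zero_iff] at hz
  set r := ‖z‖ with hrdef
  have hr0 : 0 ≤ r := norm_nonneg z
  have hr2 : r ^ 2 < 1 := by nlinarith
  have hr2' : 0 ≤ 1 - r ^ 2 := by nlinarith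
  -- denominator bounds
  have hd1 : (1 : ℝ) - r ^ 2 ≤ ‖(1 : ℂ) - z ^ 2‖ := by
    have h := norm_sub_norm_le (1 : ℂ) (z ^ 2)
    simpa [norm_pow] using h
  have hd1' : (0 : ℝ) < ‖(1 : ℂ) - z ^ 2‖ := lt_of_lt_of_le (by nlinarith) hd1
  have hd2 : (1 : ℝ) - l * r ≤ ‖(1 : ℂ) - (l : ℂ) * z‖ := by
    have h := norm_sub_norm_le (1 : ℂ) ((l : ℂ) * z)
    simpa [norm_mul, Complex.norm_real, _root_.abs_of_nonneg hl, Real.norm_eq_abs] using h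
  have hlr : l * r < 1 := by nlinarith
  have hd2' : (0 : ℝ) < ‖(1 : ℂ) - (l : ℂ) * z‖ := lt_of_lt_of_le (by nlinarith) hd2
  have hden3 : (0 : ℝ) < 1 - l ^ 2 * r ^ 2 := by nlinarith [sq_nonneg l, sq_nonneg r, mul_nonneg (mul_nonneg hl hl) (mul_nonneg hr0 hr0)]
  -- term 1
  have h1 : ‖2 * (z + (a : ℂ)) / (1 - z ^ 2)‖ * (1 - r ^ 2) ≤ 2 * (1 + |a|) := by
    rw [norm_div, div_mul_eq_mul_div, div_le_iff₀ hd1']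
    have hn : ‖2 * (z + (a : ℂ))‖ ≤ 2 * (1 + |a|) := by
      rw [norm_mul]
      have : ‖z + (a : ℂ)‖ ≤ 1 + |a| := by
        calc ‖z + (a : ℂ)‖ ≤ ‖z‖ + ‖(a : ℂ)‖ := norm_add_le _ _
        _ ≤ 1 + |a| := by rw [Complex.norm_real]; exact add_le_add hz.le le_rfl
      calc ‖(2 : ℂ)‖ * ‖z + (a : ℂ)‖ = 2 * ‖z + (a : ℂ)‖ := by norm_num
      _ ≤ 2 * (1 + |a|) := by linarith
    have ha : (0 : ℝ) ≤ 2 * (1 + |a|) := by positivity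
    exact mul_le_mul hn hd1 hr2' ha
  -- term 2
  have h2 : ‖(l : ℂ) / (1 - (l : ℂ) * z)‖ * (1 - r ^ 2) ≤ l + l ^ 2 := by
    rw [norm_div, Complex.norm_real, Real.norm_eq_abs, _root_.abs_of_nonneg hl, div_mul_eq_mul_div, div_le_iff₀ hd2']
    have key : l * (1 - r ^ 2) ≤ (l + l ^ 2) * (1 - l * r) := by
      nlinarith [mul_nonneg hl (sq_nonneg (r - l)),
        mul_nonneg (mul_nonneg (mul_nonneg hl hl) hr0) (sub_nonneg.mpr hl1.le),
        mul_nonneg (mul_nonneg hl hl) (sub_nonneg.mpr hl1.le)]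
    calc l * (1 - r ^ 2) ≤ (l + l ^ 2) * (1 - l * r) := key
    _ ≤ (l + l ^ 2) * ‖(1 : ℂ) - (l : ℂ) * z‖ := by
        apply mul_le_mul_of_nonneg_left hd2 (by positivity)
  -- term 3
  have h3 : ‖(l : ℂ) ^ 2 * (starRingEnd ℂ) z / ((1 - l ^ 2 * r ^ 2 : ℝ) : ℂ)‖ * (1 - r ^ 2)
      ≤ l ^ 2 := by
    have hnum : ‖(l : ℂ) ^ 2 * (starRingEnd ℂ) z‖ = l ^ 2 * r := by
      rw [norm_mul, norm_pow, Complex.norm_real, Real.norm_eq_abs, _root_.abs_of_nonneg hl]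
      simp [hrdef]
    have hden : ‖((1 - l ^ 2 * r ^ 2 : ℝ) : ℂ)‖ = 1 - l ^ 2 * r ^ 2 := by
      rw [Complex.norm_real, Real.norm_eq_abs, _root_.abs_of_pos hden3]
    rw [norm_div, hnum, hden, div_mul_eq_mul_div, div_le_iff₀ hden3]
    nlinarith [mul_nonneg (sq_nonneg l) (mul_nonneg hr2' (by linarith : (0:ℝ) ≤ 1 - r)),
      mul_nonneg (sq_nonneg l) (mul_nonneg (sq_nonneg r) (by nlinarith : (0:ℝ) ≤ 1 - l ^ 2))]
  -- combine
  have htri : ‖(2 * (z + (a : ℂ)) / (1 - z ^ 2) + (l : ℂ) / (1 - (l : ℂ) * z) +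
      (l : ℂ) ^ 2 * (starRingEnd ℂ) z / ((1 - l ^ 2 * r ^ 2 : ℝ) : ℂ))‖
      ≤ ‖2 * (z + (a : ℂ)) / (1 - z ^ 2)‖ + ‖(l : ℂ) / (1 - (l : ℂ) * z)‖ +
        ‖(l : ℂ) ^ 2 * (starRingEnd ℂ) z / ((1 - l ^ 2 * r ^ 2 : ℝ) : ℂ)‖ :=
    norm_add₃_le
  have := mul_le_mul_of_nonneg_right htri hr2'
  nlinarith [this, h1, h2, h3]
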